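/- Fix integers n ≥ 3 and 1 ≤ j ≤ n. Let G be the graph on 2n+1 vertices consisting of the bipartite double cover of K_n (vertex set two disjoint copies of {1,…,n}, with vertex i in one copy adjacent to vertex i' in the other copy if and only if i ≠ i') together with one additional vertex v adjacent to exactly the vertices 1,…,j in each of the two copies. Then the characteristic polynomial of the adjacency matrix of G equals (x−1)^{n−1} (x+1)^{n−2} (x+(n−1)) Q_{n,j}(x), where Q_{n,j}(x) = x(x+1)(x−(n−1)) − 2j(x−(n−1−j)). -/

import Mathlib

open Matrix Polynomial

/-- The real adjacency matrix of a finite simple graph. -/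
noncomputable def SimpleGraph.adjMat {V : Type*} [Fintype V] (G : SimpleGraph V) :
    Matrix V V ℝ :=
  letI := Classical.decRel G.Adj
  G.adjMatrix ℝ

/-- The multiset of eigenvalues of the adjacency matrix, counted with multiplicity
(the roots of the characteristic polynomial). -/
noncomputable def SimpleGraph.eigMultiset {V : Type*} [Fintype V] [DecidableEq V]
    (G : SimpleGraph V) : Multiset ℝ :=
  G.adjMat.charpoly.roots

/-- The multiset of nonzero singular values of a graph, counted with multiplicity:
the nonzero absolute values of the eigenvalues of its adjacency matrix. -/
noncomputable def SimpleGraph.nzSingVals {V : Type*} [Fintype V] [DecidableEq V]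
    (G : SimpleGraph V) : Multiset ℝ :=
  (G.eigMultiset.map (fun x => |x|)).filter (fun x => x ≠ 0)

/-- Two graphs are singularly cospectral if their multisets of nonzero singular
values (with multiplicities) coincide. -/
def SingularlyCospectral {V W : Type*} [Fintype V] [DecidableEq V] [Fintype W] [DecidableEq W]
    (G : SimpleGraph V) (H : SimpleGraph W) : Prop :=
  G.nzSingVals = H.nzSingVals

/-- The bipartite double cover of the complete graph `K_n` (vertex `i` in one copy of
`Fin n` adjacent to vertex `i'` in the other copy iff `i ≠ i'`) together with one
additional vertex (the vertex `none`) adjacent exactly to the first `j` vertices of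
each of the two copies. -/
def doubleCoverCompleteWithApex (n j : ℕ) : SimpleGraph (Option (Fin n ⊕ Fin n)) where
  Adj x y :=
    (∃ a b : Fin n, a ≠ b ∧
      ((x = some (Sum.inl a) ∧ y = some (Sum.inr b)) ∨
       (x = some (Sum.inr a) ∧ y = some (Sum.inl b)))) ∨
    (∃ a : Fin n, (a : ℕ) < j ∧
      ((x = none ∧ (y = some (Sum.inl a) ∨ y = some (Sum.inr a))) ∨
       (y = none ∧ (x = some (Sum.inl a) ∨ x = some (Sum.inr a)))))
  symm := by
    constructor
    rintro x y (⟨a, b, hab, (⟨hx, hy⟩ | ⟨hx, hy⟩)⟩ | ⟨a, ha, h⟩)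
    · exact Or.inl ⟨b, a, hab.symm, Or.inr ⟨hy, hx⟩⟩
    · exact Or.inl ⟨b, a, hab.symm, Or.inl ⟨hy, hx⟩⟩
    · exact Or.inr ⟨a, ha, by tauto⟩
  loopless := by
    constructor
    rintro x (⟨a, b, hab, (⟨hx, hy⟩ | ⟨hx, hy⟩)⟩ | ⟨a, ha, (⟨hx, hy⟩ | ⟨hx, hy⟩)⟩) <;>
      subst hx <;> simp_all

/-- The cubic polynomial `Q_{n,j}(x) = x (x+1) (x-(n-1)) - 2 j (x-(n-1-j))`. -/
noncomputable def Qpoly (n j : ℕ) : Polynomial ℝ :=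
  Polynomial.X * (Polynomial.X + 1) * (Polynomial.X - Polynomial.C ((n : ℝ) - 1)) -
    Polynomial.C (2 * (j : ℝ)) * (Polynomial.X - Polynomial.C ((n : ℝ) - 1 - (j : ℝ)))

lemma eval_charpoly' {m : Type*} [DecidableEq m] [Fintype m] (M : Matrix m m ℝ) (t : ℝ) :
    M.charpoly.eval t = (t • (1 : Matrix m m ℝ) - M).det := by
  rw [Matrix.charpoly, ← Polynomial.coe_evalRingHom, RingHom.map_det]
  congr 1
  ext i k
  by_cases h : i = k <;>
    simp [h, Matrix.charmatrix_apply, Matrix.map_apply, Matrix.sub_apply, Matrix.smul_apply,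
      Matrix.one_apply, Matrix.diagonal_apply]


noncomputable def uvec (n j : ℕ) : Fin n → ℝ := fun i => if (i : ℕ) < j then 1 else 0
def Kmat (n : ℕ) : Matrix (Fin n) (Fin n) ℝ := Matrix.of fun a b => if a = b then 0 else 1
noncomputable def wvec (n j : ℕ) : Fin n ⊕ Fin n → ℝ := Sum.elim (uvec n j) (uvec n j)

lemma det_smul_one_add_vecMulVec {m : Type*} [DecidableEq m] [Fintype m] (a : ℝ) (x y : m → ℝ)
    (ha : a ≠ 0) :
    (a • (1 : Matrix m m ℝ) + vecMulVec x y).det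
      = a ^ (Fintype.card m) * (1 + a⁻¹ * (y ⬝ᵥ x)) := by
  have h1 : a • (1 : Matrix m m ℝ) + vecMulVec x y = a • (1 + vecMulVec (a⁻¹ • x) y) := by
    rw [smul_add]
    congr 1
    ext i k
    simp [vecMulVec_apply, smul_eq_mul]
    field_simp
  rw [h1, det_smul, vecMulVec_eq Unit, det_one_add_replicateCol_mul_replicateRow]
  congr 1
  rw [dotProduct_smul]
  simp [smul_eq_mul]

private lemma det_fromBlocks_symm {m : Type*} [DecidableEq m] [Fintype m] (P Q : Matrix m m ℝ) :
    (fromBlocks P Q Q P).det = (P - Q).det * (P + Q).det := by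
  have h : fromBlocks (1:Matrix m m ℝ) 0 1 1 * fromBlocks P Q Q P * fromBlocks 1 0 (-1) 1
      = fromBlocks (P - Q) Q 0 (Q + P) := by
    rw [fromBlocks_multiply, fromBlocks_multiply]
    congr 1 <;> simp [Matrix.mul_neg] <;> abel
  have hd := congrArg Matrix.det h
  rw [det_mul, det_mul, det_fromBlocks_zero₁₂, det_fromBlocks_zero₁₂, det_one,
    det_fromBlocks_zero₂₁] at hd
  simp only [one_mul, mul_one] at hd
  rw [hd, add_comm Q P]

lemma sum_uvec (n j : ℕ) (hjn : j ≤ n) : ∑ i, uvec n j i = (j : ℝ) := by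
  have hcard : (Finset.univ.filter fun i : Fin n => (i : ℕ) < j).card = j := by
    refine Finset.card_eq_of_bijective (fun i hi => ⟨i, lt_of_lt_of_le hi hjn⟩) ?_ ?_ ?_
    · intro a ha
      rw [Finset.mem_filter] at ha
      exact ⟨a, ha.2, Fin.eta a _⟩
    · intro i hi
      simp [Finset.mem_filter]
      exact hi
    · intro i i' hi hi' h
      simpa using congrArg Fin.val h
  simp [uvec, Finset.sum_boole, hcard]

lemma sum_uvec_sq (n j : ℕ) (hjn : j ≤ n) : ∑ i, uvec n j i * uvec n j i = (j : ℝ) := by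
  rw [← sum_uvec n j hjn]
  refine Finset.sum_congr rfl fun i _ => ?_
  simp only [uvec]
  split_ifs <;> norm_num

def eOpt (n : ℕ) : Option (Fin n ⊕ Fin n) ≃ PUnit.{1} ⊕ (Fin n ⊕ Fin n) :=
  (Equiv.optionEquivSumPUnit _).trans (Equiv.sumComm _ _)

lemma reindex_adjMat (n j : ℕ) :
    (Matrix.reindex (eOpt n) (eOpt n)) (doubleCoverCompleteWithApex n j).adjMat
      = Matrix.fromBlocks 0 (Matrix.replicateRow PUnit.{1} (wvec n j)) (Matrix.replicateCol PUnit.{1} (wvec n j))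
          (Matrix.fromBlocks 0 (Kmat n) (Kmat n) 0) := by
  classical
  have hA : ∀ x y, (doubleCoverCompleteWithApex n j).adjMat x y
      = if (doubleCoverCompleteWithApex n j).Adj x y then 1 else 0 := by
    intro x y
    simp [SimpleGraph.adjMat]
  ext i i'
  rcases i with i | (a | a) <;> rcases i' with i' | (b | b) <;>
    simp only [Matrix.reindex_apply, Matrix.submatrix_apply, eOpt, Equiv.symm_trans_apply,
      Equiv.sumComm_symm, Equiv.sumComm_apply, Sum.swap_inl, Sum.swap_inr,
      Equiv.optionEquivSumPUnit_symm_inl, Equiv.optionEquivSumPUnit_symm_inr, hA] <;>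
    simp [doubleCoverCompleteWithApex, Matrix.fromBlocks, uvec, wvec, Kmat, Matrix.one_apply] <;>
    try (by_cases h : a = b <;> simp [h])

lemma det_block_eval (n j : ℕ) (hjn : j ≤ n) (t : ℝ) (ht0 : t ≠ 0) (ht1 : t - 1 ≠ 0)
    (htm : t + 1 ≠ 0) :
    (t • (1 : Matrix (PUnit.{1} ⊕ (Fin n ⊕ Fin n)) (PUnit.{1} ⊕ (Fin n ⊕ Fin n)) ℝ)
       - fromBlocks 0 (Matrix.replicateRow PUnit.{1} (wvec n j)) (Matrix.replicateCol PUnit.{1} (wvec n j))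
           (fromBlocks 0 (Kmat n) (Kmat n) 0)).det
    = t * ((t - 1) ^ n * (1 + (t - 1)⁻¹ * n))
        * ((t + 1) ^ n *
          ((1 + -((t + 1)⁻¹ * n)) * (1 + -(2 * t⁻¹ * (t + 1)⁻¹ * j))
            - (-((t + 1)⁻¹ * j)) * (-(2 * t⁻¹ * (t + 1)⁻¹ * j)))) := by
  classical
  set u := uvec n j with hu
  set K := Kmat n with hK
  set w := wvec n j with hw
  set B : Matrix (Fin n ⊕ Fin n) (Fin n ⊕ Fin n) ℝ := fromBlocks 0 K K 0 with hB
  have h1 : t • (1 : Matrix (PUnit.{1} ⊕ (Fin n ⊕ Fin n)) (PUnit.{1} ⊕ (Fin n ⊕ Fin n)) ℝ)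
      - fromBlocks 0 (Matrix.replicateRow PUnit.{1} w) (Matrix.replicateCol PUnit.{1} w) B
      = fromBlocks (t • 1) (-(Matrix.replicateRow PUnit.{1} w)) (-(Matrix.replicateCol PUnit.{1} w)) (t • 1 - B) := by
    rw [← fromBlocks_one, fromBlocks_smul, sub_eq_add_neg, fromBlocks_neg, fromBlocks_add]
    congr 1 <;> simp [sub_eq_add_neg]
  have hmul : (t • (1 : Matrix PUnit.{1} PUnit.{1} ℝ)) * (t⁻¹ • 1) = 1 := by
    rw [Matrix.smul_mul, Matrix.mul_smul, smul_smul, Matrix.one_mul, mul_inv_cancel₀ ht0, one_smul]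
  have hmul' : (t⁻¹ • (1 : Matrix PUnit.{1} PUnit.{1} ℝ)) * (t • 1) = 1 := by
    rw [Matrix.smul_mul, Matrix.mul_smul, smul_smul, Matrix.one_mul, inv_mul_cancel₀ ht0, one_smul]
  haveI : Invertible (t • (1 : Matrix PUnit.{1} PUnit.{1} ℝ)) := ⟨t⁻¹ • 1, hmul', hmul⟩
  have hinv : ⅟(t • (1 : Matrix PUnit.{1} PUnit.{1} ℝ)) = t⁻¹ • 1 := invOf_eq_right_inv hmul
  rw [h1, Matrix.det_fromBlocks₁₁, hinv]
  have hdet1 : (t • (1 : Matrix PUnit.{1} PUnit.{1} ℝ)).det = t := by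
    rw [Matrix.det_unique]
    simp
  have h2 : (-(Matrix.replicateCol PUnit.{1} w)) * (t⁻¹ • (1 : Matrix PUnit.{1} PUnit.{1} ℝ)) * (-(Matrix.replicateRow PUnit.{1} w))
      = t⁻¹ • vecMulVec w w := by
    rw [Matrix.mul_smul, Matrix.mul_one, Matrix.smul_mul, Matrix.neg_mul, Matrix.mul_neg, neg_neg,
      ← vecMulVec_eq]
  rw [hdet1, h2]
  -- inner matrix as fromBlocks P Q Q P
  set P : Matrix (Fin n) (Fin n) ℝ := t • 1 - t⁻¹ • vecMulVec u u with hP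
  set Q : Matrix (Fin n) (Fin n) ℝ := -K - t⁻¹ • vecMulVec u u with hQ
  have h3 : t • (1 : Matrix (Fin n ⊕ Fin n) (Fin n ⊕ Fin n) ℝ) - B - t⁻¹ • vecMulVec w w
      = fromBlocks P Q Q P := by
    ext (i | i) (i' | i') <;>
      simp [hB, hP, hQ, hw, wvec, hu, Kmat, hK, vecMulVec_apply, Matrix.one_apply,
        Matrix.smul_apply, Matrix.sub_apply, Matrix.neg_apply, uvec]
  rw [h3, det_fromBlocks_symm]
  -- P - Q
  have h4 : P - Q = (t - 1) • 1 + vecMulVec (fun _ => (1:ℝ)) (fun _ => (1:ℝ)) := by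
    ext i i'
    simp only [hP, hQ, Matrix.sub_apply, Matrix.add_apply, Matrix.smul_apply, Matrix.neg_apply,
      Matrix.one_apply, vecMulVec_apply, hK, Kmat, Matrix.of_apply, smul_eq_mul]
    by_cases h : i = i' <;> simp [h] <;> ring
  -- P + Q
  set U : Matrix (Fin n) (Fin 2) ℝ := Matrix.of fun i => ![1, u i] with hU
  set Wm : Matrix (Fin 2) (Fin n) ℝ := Matrix.of ![fun _ => -1, fun i => -2 * t⁻¹ * u i] with hWm
  have h5 : P + Q = (t + 1) • (1 + ((t + 1)⁻¹ • U) * Wm) := by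
    have h6 : (t + 1) • (((t + 1)⁻¹ • U) * Wm) = U * Wm := by
      rw [Matrix.smul_mul, smul_smul, mul_inv_cancel₀ htm, one_smul]
    rw [smul_add, h6]
    ext i i'
    simp only [hP, hQ, Matrix.sub_apply, Matrix.add_apply, Matrix.smul_apply, Matrix.neg_apply,
      Matrix.one_apply, vecMulVec_apply, hK, Kmat, Matrix.of_apply, smul_eq_mul,
      Matrix.mul_apply, hU, hWm, Fin.sum_univ_two, Matrix.cons_val_zero, Matrix.cons_val_one,
      Matrix.head_cons]
    by_cases h : i = i' <;> simp [h] <;> ring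
  rw [h4, h5, det_smul_one_add_vecMulVec _ _ _ ht1, Matrix.det_smul,
    Matrix.det_one_add_mul_comm]
  have hsu := sum_uvec n j hjn
  have hsuu := sum_uvec_sq n j hjn
  set N := Wm * ((t + 1)⁻¹ • U) with hN
  have h00 : N 0 0 = -((t + 1)⁻¹ * n) := by
    rw [hN, Matrix.mul_apply]
    have step : ∀ i : Fin n, Wm 0 i * ((t + 1)⁻¹ • U) i 0 = -(t + 1)⁻¹ := fun i => by
      simp [hU, hWm, Matrix.smul_apply]
    rw [Finset.sum_congr rfl fun i _ => step i, Finset.sum_const]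
    simp [nsmul_eq_mul]
    try ring
  have h01 : N 0 1 = -((t + 1)⁻¹ * j) := by
    rw [hN, Matrix.mul_apply]
    have step : ∀ i : Fin n, Wm 0 i * ((t + 1)⁻¹ • U) i 1 = (-(t + 1)⁻¹) * u i := fun i => by
      simp [hU, hWm, Matrix.smul_apply]
      try ring
    rw [Finset.sum_congr rfl fun i _ => step i, ← Finset.mul_sum, hsu]
    ring
  have h10 : N 1 0 = -(2 * t⁻¹ * (t + 1)⁻¹ * j) := by
    rw [hN, Matrix.mul_apply]
    have step : ∀ i : Fin n, Wm 1 i * ((t + 1)⁻¹ • U) i 0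
        = (-2 * t⁻¹ * (t + 1)⁻¹) * u i := fun i => by
      simp [hU, hWm, Matrix.smul_apply]
      try ring
    rw [Finset.sum_congr rfl fun i _ => step i, ← Finset.mul_sum, hsu]
    ring
  have h11 : N 1 1 = -(2 * t⁻¹ * (t + 1)⁻¹ * j) := by
    rw [hN, Matrix.mul_apply]
    have step : ∀ i : Fin n, Wm 1 i * ((t + 1)⁻¹ • U) i 1
        = (-2 * t⁻¹ * (t + 1)⁻¹) * (u i * u i) := fun i => by
      simp [hU, hWm, Matrix.smul_apply]
      try ring
    rw [Finset.sum_congr rfl fun i _ => step i, ← Finset.mul_sum, hsuu]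
    ring
  rw [Matrix.det_fin_two, Matrix.add_apply, Matrix.add_apply, Matrix.add_apply, Matrix.add_apply,
    h00, h01, h10, h11, Matrix.one_apply_eq, Matrix.one_apply_eq,
    Matrix.one_apply_ne (by decide : (0 : Fin 2) ≠ 1),
    Matrix.one_apply_ne (by decide : (1 : Fin 2) ≠ 0)]
  have hdot : (fun _ : Fin n => (1:ℝ)) ⬝ᵥ (fun _ : Fin n => (1:ℝ)) = (n : ℝ) := by
    simp [dotProduct]
  rw [hdot]
  simp only [Fintype.card_fin]
  ring

/-- Let `n ≥ 3` and `1 ≤ j ≤ n`, and let `G` be the bipartite double cover of `K_n`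
together with one additional vertex adjacent to exactly the vertices `1, …, j` in each
of the two copies.  Then the characteristic polynomial of the adjacency matrix of `G`
equals `(x-1)^(n-1) (x+1)^(n-2) (x+(n-1)) Q_{n,j}(x)`. -/
theorem charpoly_doubleCoverCompleteWithApex (n j : ℕ) (hn : 3 ≤ n) (hj1 : 1 ≤ j)
    (hjn : j ≤ n) :
    (doubleCoverCompleteWithApex n j).adjMat.charpoly =
      (Polynomial.X - 1) ^ (n - 1) * (Polynomial.X + 1) ^ (n - 2) *
        (Polynomial.X + Polynomial.C ((n : ℝ) - 1)) * Qpoly n j := by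
  classical
  obtain ⟨k, rfl⟩ := Nat.exists_eq_add_of_le hn
  have hcp : (doubleCoverCompleteWithApex (3+k) j).adjMat.charpoly
      = (Matrix.fromBlocks 0 (Matrix.replicateRow PUnit.{1} (wvec (3+k) j)) (Matrix.replicateCol PUnit.{1} (wvec (3+k) j))
          (Matrix.fromBlocks 0 (Kmat (3+k)) (Kmat (3+k)) 0)).charpoly := by
    rw [← reindex_adjMat (3+k) j, Matrix.charpoly_reindex]
  rw [hcp]
  apply Polynomial.eq_of_infinite_eval_eq
  apply Set.Infinite.mono (s := (({0, 1, -1} : Set ℝ))ᶜ)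
  · intro t ht
    simp only [Set.mem_compl_iff, Set.mem_insert_iff, Set.mem_singleton_iff, not_or] at ht
    obtain ⟨ht0, ht1, htm⟩ := ht
    have ht1' : t - 1 ≠ 0 := sub_ne_zero.mpr ht1
    have htm' : t + 1 ≠ 0 := by
      intro h
      apply htm
      linarith
    show eval t _ = eval t _
    rw [eval_charpoly', det_block_eval (3+k) j hjn t ht0 ht1' htm']
    simp only [eval_mul, eval_pow, eval_sub, eval_add, eval_one, eval_X, eval_C, Qpoly]
    rw [show 3 + k - 1 = k + 2 from by omega, show 3 + k - 2 = k + 1 from by omega]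
    rw [show (t - 1)^(3+k) = (t-1)^(k+2) * (t-1) from by
        rw [show 3+k = (k+2)+1 from by omega, pow_succ],
      show (t + 1)^(3+k) = (t+1)^(k+1) * (t+1)^2 from by
        rw [show 3+k = (k+1)+2 from by omega, pow_add]]
    push_cast
    have key : t * ((t-1) * (1 + (t-1)⁻¹ * ((3:ℝ)+k)))
        * ((t+1)^2 * ((1 + -((t+1)⁻¹*((3:ℝ)+k))) * (1 + -(2*t⁻¹*(t+1)⁻¹*(j:ℝ)))
            - (-((t+1)⁻¹*(j:ℝ))) * (-(2*t⁻¹*(t+1)⁻¹*(j:ℝ)))))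
        = (t + ((3:ℝ)+k-1)) * (t*(t+1)*(t - ((3:ℝ)+k-1)) - 2*(j:ℝ)*(t - ((3:ℝ)+k-1-(j:ℝ)))) := by
      field_simp
      ring
    linear_combination ((t-1)^(k+2) * (t+1)^(k+1)) * key
  · exact (Set.toFinite ({0, 1, -1} : Set ℝ)).infinite_compl
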